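/- Let n ≥ 1, ζ = e^{2πi/n}, N = ⌊n/2⌋, and let π be any permutation of {0, 1, …, N}. Then there exist real numbers a₀, …, a_{n−1} such that the eigenvalues μ_k = Σ_{j=0}^{n−1} a_j ζ^{jk} of the circulant matrix Σ a_j A^j satisfy: Re(μ_k) < Re(μ_l) if and only if π(k) > π(l), for all 0 ≤ k, l ≤ N. That is, the real parts of μ_0, …, μ_N can be put in any prescribed strict order. -/

import Mathlib

open Complex

lemma orth {n : ℕ} {ζ : ℂ} (hp : IsPrimitiveRoot ζ n) (r : ℕ) :
    ∑ j : Fin n, ζ ^ ((j : ℕ) * r) = if n ∣ r then (n : ℂ) else 0 := by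
  have h1 : ∀ j : Fin n, ζ ^ ((j : ℕ) * r) = (ζ ^ r) ^ (j : ℕ) := by
    intro j; rw [← pow_mul, Nat.mul_comm]
  simp_rw [h1]
  rw [Fin.sum_univ_eq_sum_range]
  by_cases hd : n ∣ r
  · rw [if_pos hd]
    have : ζ ^ r = 1 := (hp.pow_eq_one_iff_dvd r).2 hd
    simp [this]
  · rw [if_neg hd]
    have hne : ζ ^ r ≠ 1 := fun h => hd ((hp.pow_eq_one_iff_dvd r).1 h)
    rw [geom_sum_eq hne]
    have : (ζ ^ r) ^ n = 1 := by rw [← pow_mul, mul_comm, pow_mul, hp.pow_eq_one, one_pow]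
    simp [this]

lemma pow_congr' {n : ℕ} {ζ : ℂ} (hp : IsPrimitiveRoot ζ n) {A B : ℕ}
    (h : (A : ZMod n) = (B : ZMod n)) : ζ ^ A = ζ ^ B := by
  have hmod : A % n = B % n := (ZMod.natCast_eq_natCast_iff A B n).1 h
  calc ζ ^ A = ζ ^ (n * (A / n) + A % n) := by rw [Nat.div_add_mod]
    _ = (ζ ^ n) ^ (A / n) * ζ ^ (A % n) := by rw [pow_add, pow_mul]
    _ = ζ ^ (B % n) := by rw [hp.pow_eq_one, one_pow, one_mul, hmod]
    _ = (ζ ^ n) ^ (B / n) * ζ ^ (B % n) := by rw [hp.pow_eq_one, one_pow, one_mul]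
    _ = ζ ^ B := by rw [← pow_mul, ← pow_add, Nat.div_add_mod]

lemma dvd_small {n s : ℕ} (h : s < 2 * n) : n ∣ s ↔ s = 0 ∨ s = n := by
  constructor
  · rintro ⟨c, rfl⟩
    rcases Nat.lt_or_ge c 2 with hc | hc
    · interval_cases c <;> simp
    · exfalso; have := Nat.mul_le_mul_left n hc; omega
  · rintro (rfl | rfl) <;> simp

lemma key {n : ℕ} (hn : 1 ≤ n) [NeZero n] {ζ : ℂ} (hp : IsPrimitiveRoot ζ n) (t : Fin n → ℝ) :
    ∃ a : Fin n → ℝ, ∀ k : Fin n,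
      ∑ j : Fin n, (a j : ℂ) * ζ ^ ((j : ℕ) * (k : ℕ)) = (((t k + t (-k)) / 2 : ℝ) : ℂ) := by
  have hnC : (n : ℂ) ≠ 0 := Nat.cast_ne_zero.2 (by omega)
  have hneg1 : ((n - 1 : ℕ) : ZMod n) = -1 := by
    rw [Nat.cast_sub hn, ZMod.natCast_self, Nat.cast_one, zero_sub]
  have habs : ζ * (starRingEnd ℂ) ζ = 1 := by
    rw [Complex.mul_conj]
    have h2 : ‖ζ‖ = 1 :=
      Complex.norm_eq_one_of_pow_eq_one hp.pow_eq_one (by omega)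
    rw [← Complex.sq_norm, h2]; norm_num
  have hconj : (starRingEnd ℂ) ζ = ζ ^ (n - 1) := by
    have h2 : ζ * ζ ^ (n - 1) = 1 := by
      rw [← pow_succ']
      have h3 : n - 1 + 1 = n := by omega
      rw [h3, hp.pow_eq_one]
    calc (starRingEnd ℂ) ζ = (starRingEnd ℂ) ζ * (ζ * ζ ^ (n - 1)) := by rw [h2, mul_one]
      _ = (ζ * (starRingEnd ℂ) ζ) * ζ ^ (n - 1) := by ring
      _ = ζ ^ (n - 1) := by rw [habs, one_mul]
  set g : Fin n → ℂ := fun j => (n : ℂ)⁻¹ * ∑ m : Fin n, (t m : ℂ) * ζ ^ ((j : ℕ) * (m : ℕ) * (n - 1)) with hg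
  -- conjugate of g
  have hconjg : ∀ j : Fin n, (starRingEnd ℂ) (g j)
      = (n : ℂ)⁻¹ * ∑ m : Fin n, (t m : ℂ) * ζ ^ ((j : ℕ) * (m : ℕ)) := by
    intro j
    rw [hg]
    simp only [map_mul, map_sum, map_inv₀, map_natCast, Complex.conj_ofReal, map_pow, hconj]
    congr 1
    refine Finset.sum_congr rfl fun m _ => ?_
    congr 1
    rw [← pow_mul]
    refine pow_congr' hp ?_
    push_cast [hneg1]
    ring
  refine ⟨fun j => (g j).re, fun k => ?_⟩
  have hsplit : ∀ j : Fin n, (((g j).re : ℝ) : ℂ) = (g j + (starRingEnd ℂ) (g j)) / 2 := by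
    intro j
    rw [Complex.add_conj]
    push_cast
    ring
  have hiff1 : ∀ m : Fin n, (n ∣ (m : ℕ) * (n - 1) + (k : ℕ)) ↔ m = k := by
    intro m
    constructor
    · intro h
      have h0 : (((m : ℕ) * (n - 1) + (k : ℕ) : ℕ) : ZMod n) = 0 :=
        (ZMod.natCast_eq_zero_iff _ n).2 h
      push_cast [hneg1] at h0
      have h' : (((m : ℕ) : ZMod n)) = ((k : ℕ) : ZMod n) := by linear_combination -h0
      have h'' := (ZMod.natCast_eq_natCast_iff' _ _ _).1 h'
      rw [Nat.mod_eq_of_lt m.isLt, Nat.mod_eq_of_lt k.isLt] at h''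
      exact Fin.ext h''
    · rintro rfl
      refine (ZMod.natCast_eq_zero_iff _ n).1 ?_
      push_cast [hneg1]
      ring
  have hiff2 : ∀ m : Fin n, (n ∣ (m : ℕ) + (k : ℕ)) ↔ m = -k := by
    intro m
    rw [dvd_small (by omega : (m : ℕ) + (k : ℕ) < 2 * n), Fin.ext_iff, Fin.neg_def]
    simp only []
    by_cases h0 : (k : ℕ) = 0
    · rw [h0, Nat.sub_zero, Nat.mod_self]
      have := m.isLt
      omega
    · rw [Nat.mod_eq_of_lt (by omega)]
      have := m.isLt
      have := k.isLt
      omega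
  have hS1 : ∑ j : Fin n, g j * ζ ^ ((j : ℕ) * (k : ℕ)) = ((t k : ℝ) : ℂ) := by
    calc ∑ j : Fin n, g j * ζ ^ ((j : ℕ) * (k : ℕ))
        = (n : ℂ)⁻¹ * ∑ j : Fin n, ∑ m : Fin n,
            (t m : ℂ) * ζ ^ ((j : ℕ) * ((m : ℕ) * (n - 1) + (k : ℕ))) := by
          rw [Finset.mul_sum]
          refine Finset.sum_congr rfl fun j _ => ?_
          rw [hg]
          simp only []
          rw [mul_assoc, Finset.sum_mul]
          congr 1
          refine Finset.sum_congr rfl fun m _ => ?_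
          rw [mul_assoc, ← pow_add]
          congr 2
          ring
      _ = (n : ℂ)⁻¹ * ∑ m : Fin n, (t m : ℂ) *
            ∑ j : Fin n, ζ ^ ((j : ℕ) * ((m : ℕ) * (n - 1) + (k : ℕ))) := by
          rw [Finset.sum_comm]
          congr 1
          exact Finset.sum_congr rfl fun m _ => (Finset.mul_sum _ _ _).symm
      _ = (n : ℂ)⁻¹ * ∑ m : Fin n, (t m : ℂ) * (if m = k then (n : ℂ) else 0) := by
          congr 1
          refine Finset.sum_congr rfl fun m _ => ?_
          rw [orth hp, if_congr (hiff1 m) rfl rfl]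
      _ = ((t k : ℝ) : ℂ) := by
          simp only [mul_ite, mul_zero, Finset.sum_ite_eq', Finset.mem_univ, if_true]
          field_simp
  have hS2 : ∑ j : Fin n, (starRingEnd ℂ) (g j) * ζ ^ ((j : ℕ) * (k : ℕ)) = ((t (-k) : ℝ) : ℂ) := by
    calc ∑ j : Fin n, (starRingEnd ℂ) (g j) * ζ ^ ((j : ℕ) * (k : ℕ))
        = (n : ℂ)⁻¹ * ∑ j : Fin n, ∑ m : Fin n,
            (t m : ℂ) * ζ ^ ((j : ℕ) * ((m : ℕ) + (k : ℕ))) := by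
          rw [Finset.mul_sum]
          refine Finset.sum_congr rfl fun j _ => ?_
          rw [hconjg j, mul_assoc, Finset.sum_mul]
          congr 1
          refine Finset.sum_congr rfl fun m _ => ?_
          rw [mul_assoc, ← pow_add]
          congr 2
          ring
      _ = (n : ℂ)⁻¹ * ∑ m : Fin n, (t m : ℂ) *
            ∑ j : Fin n, ζ ^ ((j : ℕ) * ((m : ℕ) + (k : ℕ))) := by
          rw [Finset.sum_comm]
          congr 1
          exact Finset.sum_congr rfl fun m _ => (Finset.mul_sum _ _ _).symm
      _ = (n : ℂ)⁻¹ * ∑ m : Fin n, (t m : ℂ) * (if m = -k then (n : ℂ) else 0) := by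
          congr 1
          refine Finset.sum_congr rfl fun m _ => ?_
          rw [orth hp, if_congr (hiff2 m) rfl rfl]
      _ = ((t (-k) : ℝ) : ℂ) := by
          simp only [mul_ite, mul_zero, Finset.sum_ite_eq', Finset.mem_univ, if_true]
          field_simp
  calc ∑ j : Fin n, (((g j).re : ℝ) : ℂ) * ζ ^ ((j : ℕ) * (k : ℕ))
      = ∑ j : Fin n, (g j * ζ ^ ((j : ℕ) * (k : ℕ))
          + (starRingEnd ℂ) (g j) * ζ ^ ((j : ℕ) * (k : ℕ))) / 2 := by
        refine Finset.sum_congr rfl fun j _ => ?_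
        rw [hsplit j]
        ring
    _ = ((∑ j : Fin n, g j * ζ ^ ((j : ℕ) * (k : ℕ)))
          + ∑ j : Fin n, (starRingEnd ℂ) (g j) * ζ ^ ((j : ℕ) * (k : ℕ))) / 2 := by
        rw [← Finset.sum_add_distrib, Finset.sum_div]
    _ = (((t k + t (-k)) / 2 : ℝ) : ℂ) := by
        rw [hS1, hS2]
        push_cast
        ring

/-- Any prescribed strict ordering of the real parts of the eigenvalues
`μ_0, …, μ_N` (`N = ⌊n/2⌋`) of a circulant matrix can be realised by suitable
real coupling strengths `a₀, …, a_{n-1}`. -/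
theorem stmt_15 {n : ℕ} (hn : 1 ≤ n)
    (ζ : ℂ) (hζ : ζ = Complex.exp (2 * Real.pi * Complex.I / n))
    (π : Equiv.Perm (Fin (n / 2 + 1))) :
    ∃ a : Fin n → ℝ,
      ∀ k l : Fin (n / 2 + 1),
        (∑ j : Fin n, (a j : ℂ) * ζ ^ ((j : ℕ) * (k : ℕ))).re <
          (∑ j : Fin n, (a j : ℂ) * ζ ^ ((j : ℕ) * (l : ℕ))).re ↔
        π l < π k := by
  haveI : NeZero n := ⟨by omega⟩
  have hp : IsPrimitiveRoot ζ n := hζ ▸ Complex.isPrimitiveRoot_exp n (by omega)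
  have hidxlt : ∀ m : Fin n, min m.val (n - m.val) < n / 2 + 1 := by
    intro m; have := m.isLt; omega
  set idx : Fin n → Fin (n / 2 + 1) := fun m => ⟨min m.val (n - m.val), hidxlt m⟩ with hidx
  set t : Fin n → ℝ := fun m => -((π (idx m)).val : ℝ) with ht
  obtain ⟨a, ha⟩ := key hn hp t
  refine ⟨a, fun k l => ?_⟩
  have hval : ∀ k : Fin (n / 2 + 1),
      (∑ j : Fin n, (a j : ℂ) * ζ ^ ((j : ℕ) * (k : ℕ))).re = -(((π k) : ℕ) : ℝ) := by
    intro k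
    have hkle : (k : ℕ) ≤ n / 2 := by have := k.isLt; omega
    have hk : (k : ℕ) < n := by omega
    set k' : Fin n := ⟨(k : ℕ), hk⟩ with hk'
    have h1 : (∑ j : Fin n, (a j : ℂ) * ζ ^ ((j : ℕ) * (k : ℕ)))
        = (((t k' + t (-k')) / 2 : ℝ) : ℂ) := ha k'
    have hkk : idx k' = k := by
      apply Fin.ext
      simp only [hidx, hk']
      omega
    have hm : (n - (k : ℕ)) % n = if (k : ℕ) = 0 then 0 else n - (k : ℕ) := by
      by_cases h0 : (k : ℕ) = 0
      · simp [h0]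
      · rw [if_neg h0, Nat.mod_eq_of_lt (by omega)]
    have hnk : idx (-k') = k := by
      apply Fin.ext
      simp only [hidx, Fin.neg_def, hk', hm]
      split_ifs with h0 <;> omega
    rw [h1, Complex.ofReal_re, ht]
    simp only [hkk, hnk]
    ring
  rw [hval k, hval l, neg_lt_neg_iff, Nat.cast_lt]
  exact Iff.rfl
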